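/- arXiv:2310.18036 — 2 statements merged into one kernel-verified Lean document; each statement's English description precedes it below -/
import Mathlib

section
/- Let T be a 2-cut search tree on a tree G, let v be a node with parent p, and let a ∈ ∂(T_p). Then the three vertices v, p, a lie on a common path in G (in some order). -/
open SimpleGraph

variable {V : Type*}

/-- Reachability within a vertex set `S`. -/
def reachIn (G : SimpleGraph V) (S : Set V) : V → V → Prop :=
  Relation.ReflTransGen (fun x y => x ∈ S ∧ y ∈ S ∧ G.Adj x y)

/-- The connected component of `v` inside the vertex set `S`. -/
def compIn (G : SimpleGraph V) (S : Set V) (v : V) : Set V :=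
  {u | reachIn G S v u}

/-- `IsSearchTree G par S r`: the parent map `par` describes a search tree with root `r`
on the part of `G` induced by `S`, built recursively: the root `r` is chosen, and each
connected component of `S \ {r}` carries a search tree whose root is a child of `r`. -/
inductive IsSearchTree (G : SimpleGraph V) (par : V → Option V) : Set V → V → Prop where
  | node (S : Set V) (r : V) (ρ : V → V) (hr : r ∈ S)
      (hρ : ∀ v ∈ S, v ≠ r → par (ρ v) = some r)
      (h : ∀ v ∈ S, v ≠ r → IsSearchTree G par (compIn G (S \ {r}) v) (ρ v)) :
      IsSearchTree G par S r

/-- `isAnc par a v`: `a` is an ancestor of `v` (reflexively). -/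
def isAnc (par : V → Option V) (a v : V) : Prop :=
  Relation.ReflTransGen (fun x y => par x = some y) v a

/-- The subtree rooted at `v`: all descendants of `v` (including `v`). -/
def subtree (par : V → Option V) (v : V) : Set V := {u | isAnc par v u}

/-- The outer boundary `∂(T_v)` of the subtree rooted at `v`. -/
def bdry (G : SimpleGraph V) (par : V → Option V) (v : V) : Set V :=
  {x | x ∉ subtree par v ∧ ∃ u ∈ subtree par v, G.Adj x u}

/-- A search tree is 2-cut if every subtree boundary has size at most 2. -/
def TwoCut (G : SimpleGraph V) (par : V → Option V) : Prop :=
  ∀ v, (bdry G par v).ncard ≤ 2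

open Classical in
/-- The STT rotation of `v` with its parent `p`: `p` becomes a child of `v`, `v` takes the
former parent of `p`, and any child `c` of `v` with `p ∈ ∂(T_c)` is reattached to `p`. -/
noncomputable def rotate (G : SimpleGraph V) (par : V → Option V) (v p : V) :
    V → Option V := fun x =>
  if x = v then par p
  else if x = p then some v
  else if par x = some v ∧ p ∈ bdry G par x then some p
  else par x

/-- A splay step at `x`: a single rotation if `x` has no grandparent; a ZIG-ZAG
(two rotations at `x`) if `x` is a separator; a ZIG-ZIG (rotation at the parent,
then at `x`) otherwise. -/
noncomputable def splayStep (G : SimpleGraph V) (par : V → Option V) (x : V) :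
    V → Option V :=
  match par x with
  | none => par
  | some p =>
    match par p with
    | none => rotate G par x p
    | some g =>
      if (bdry G par x).ncard = 2 then
        rotate G (rotate G par x p) x g
      else
        rotate G (rotate G par p g) x p

section Aux

variable {G : SimpleGraph V} {par : V → Option V} {S A : Set V} {r x y z u v p : V}

lemma reachIn.symm (h : reachIn G A x y) : reachIn G A y x := by
  induction h with
  | refl => exact Relation.ReflTransGen.refl
  | tail _ h2 ih => exact Relation.ReflTransGen.head ⟨h2.2.1, h2.1, h2.2.2.symm⟩ ih

lemma reachIn.trans (h : reachIn G A x y) (h' : reachIn G A y z) : reachIn G A x z :=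
  Relation.ReflTransGen.trans h h'

lemma mem_compIn_self : x ∈ compIn G A x := Relation.ReflTransGen.refl

lemma mem_compIn_cases (h : y ∈ compIn G A x) : y = x ∨ y ∈ A := by
  rcases (Relation.ReflTransGen.cases_tail h) with h | ⟨c, _, hc⟩
  · exact Or.inl h
  · exact Or.inr hc.2.1

lemma compIn_subset (hx : x ∈ A) : compIn G A x ⊆ A := by
  intro y hy; rcases mem_compIn_cases hy with rfl | h
  · exact hx
  · exact h

lemma mem_compIn_closure (hy : y ∈ compIn G A x) (h : reachIn G A y z) : z ∈ compIn G A x :=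
  reachIn.trans hy h

lemma reachIn_compIn (h : reachIn G A x y) : reachIn G (compIn G A x) x y := by
  induction h with
  | refl => exact Relation.ReflTransGen.refl
  | @tail b c h1 h2 ih =>
      exact Relation.ReflTransGen.tail ih ⟨h1, mem_compIn_closure h1
        (Relation.ReflTransGen.single h2), h2.2.2⟩

lemma isAnc_refl : isAnc par x x := Relation.ReflTransGen.refl

lemma mem_subtree_self : x ∈ subtree par x := isAnc_refl

lemma isAnc_of_par (h : par v = some p) : isAnc par p v := Relation.ReflTransGen.single h

lemma isAnc.trans (h : isAnc par x y) (h' : isAnc par y z) : isAnc par x z :=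
  Relation.ReflTransGen.trans h' h

lemma eq_of_self_par_isAnc (hv : par v = some v) (h : isAnc par r v) : r = v := by
  induction h with
  | refl => rfl
  | tail _ h2 ih => subst ih; rw [hv] at h2; exact (Option.some_injective _ h2).symm

lemma exists_child (h : isAnc par v x) (hne : x ≠ v) :
    ∃ c, par c = some v ∧ isAnc par c x := by
  rcases Relation.ReflTransGen.cases_tail h with h | ⟨c, hc1, hc2⟩
  · exact absurd h.symm hne
  · exact ⟨c, hc2, hc1⟩

lemma parent_loc (hT : IsSearchTree G par S r) :
    ∀ u ∈ S, u ≠ r → par u = some r ∨ ∃ w ∈ compIn G (S \ {r}) u, par u = some w := by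
  induction hT with
  | node S r ρ hr hρ h ih =>
      intro u hu hur
      by_cases hroot : u = ρ u
      · exact Or.inl (hroot ▸ hρ u hu hur)
      · rcases ih u hu hur u mem_compIn_self hroot with h1 | ⟨w, hw1, hw2⟩
        · refine Or.inr ⟨ρ u, ?_, h1⟩
          rcases h u hu hur with ⟨_, _, _, hr', _, _⟩
          exact hr'
        · refine Or.inr ⟨w, ?_, hw2⟩
          rcases mem_compIn_cases hw1 with rfl | hw3
          · exact mem_compIn_self
          · exact hw3.1

end Aux

section Master

variable {G : SimpleGraph V} {par : V → Option V} {S A : Set V} {r x y z u v p : V}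

lemma master_aux (hT : IsSearchTree G par S r)
    (closed : ∀ x, x ∉ S → ∀ y ∈ S, par x ≠ some y)
    (rootout : ∀ y ∈ S, par r ≠ some y) :
    subtree par r = S ∧ ∀ v ∈ S, v ≠ r →
      ∃ p, p ∈ S ∧ par v = some p ∧ subtree par v = compIn G (subtree par p \ {p}) v := by
  induction hT with
  | node S r ρ hr hρ h ih =>
    -- components are closed
    have hCsub : ∀ v ∈ S, v ≠ r → compIn G (S \ {r}) v ⊆ S \ {r} := by
      intro v hv hvr
      exact compIn_subset ⟨hv, hvr⟩
    have closedC : ∀ v ∈ S, v ≠ r → ∀ x, x ∉ compIn G (S \ {r}) v →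
        ∀ y ∈ compIn G (S \ {r}) v, par x ≠ some y := by
      intro v hv hvr x hx y hy hxy
      have hyS : y ∈ S \ {r} := hCsub v hv hvr hy
      by_cases hxS : x ∈ S
      · by_cases hxr : x = r
        · exact rootout y hyS.1 (hxr ▸ hxy)
        · rcases parent_loc (IsSearchTree.node S r ρ hr hρ h) x hxS hxr with h1 | ⟨w, hw1, hw2⟩
          · rw [h1] at hxy
            exact hyS.2 (Option.some_injective _ hxy).symm
          · rw [hw2] at hxy
            obtain rfl : w = y := Option.some_injective _ hxy
            -- y ∈ compIn x and y ∈ compIn v ⇒ x ∈ compIn v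
            exact hx (mem_compIn_closure hy (reachIn.symm hw1))
      · exact closed x hxS y hyS.1 hxy
    have rootoutC : ∀ v ∈ S, v ≠ r → ∀ y ∈ compIn G (S \ {r}) v, par (ρ v) ≠ some y := by
      intro v hv hvr y hy hc
      rw [hρ v hv hvr] at hc
      exact (hCsub v hv hvr hy).2 (Option.some_injective _ hc).symm
    have IH : ∀ v ∈ S, ∀ hvr : v ≠ r,
        subtree par (ρ v) = compIn G (S \ {r}) v ∧
        ∀ u ∈ compIn G (S \ {r}) v, u ≠ ρ v →
          ∃ p, p ∈ compIn G (S \ {r}) v ∧ par u = some p ∧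
            subtree par u = compIn G (subtree par p \ {p}) u := by
      intro v hv hvr
      exact ih v hv hvr (closedC v hv hvr) (rootoutC v hv hvr)
    have hSr : subtree par r = S := by
      apply Set.eq_of_subset_of_subset
      · -- subtree r ⊆ S
        intro u hu
        induction hu using Relation.ReflTransGen.head_induction_on with
        | refl => exact hr
        | @head a c h1 h2 ih2 =>
          by_contra haS
          exact closed a haS c ih2 h1
      · -- S ⊆ subtree r
        intro u hu
        by_cases hur : u = r
        · exact hur ▸ mem_subtree_self
        · have h1 := (IH u hu hur).1
          have h2 : u ∈ subtree par (ρ u) := h1 ▸ mem_compIn_self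
          exact Relation.ReflTransGen.tail h2 (hρ u hu hur)
    refine ⟨hSr, ?_⟩
    intro v hv hvr
    by_cases hroot : v = ρ v
    · refine ⟨r, hr, hroot ▸ hρ v hv hvr, ?_⟩
      have h1 := (IH v hv hvr).1
      rw [← hroot] at h1
      rw [h1, hSr]
    · obtain ⟨q, hq1, hq2, hq3⟩ := (IH v hv hvr).2 v mem_compIn_self hroot
      exact ⟨q, (hCsub v hv hvr hq1).1, hq2, hq3⟩

end Master

section Derived

variable {G : SimpleGraph V} {par : V → Option V} {r x y z u v p c : V}

variable (hroot : par r = none) (hT : IsSearchTree G par Set.univ r)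

include hroot hT

lemma subtree_root_univ : subtree par r = Set.univ :=
  (master_aux hT (fun x hx => absurd (Set.mem_univ x) hx)
    (fun y _ hc => by rw [hroot] at hc; exact nomatch hc)).1

lemma subtree_eq_comp (hvp : par v = some p) :
    subtree par v = compIn G (subtree par p \ {p}) v := by
  have hvr : v ≠ r := fun h => by rw [h, hroot] at hvp; exact nomatch hvp
  obtain ⟨p', _, hp', heq⟩ := (master_aux hT (fun x hx => absurd (Set.mem_univ x) hx)
    (fun y _ hc => by rw [hroot] at hc; exact nomatch hc)).2 v (Set.mem_univ v) hvr
  rw [hvp] at hp'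
  obtain rfl : p' = p := (Option.some_injective _ hp'.symm)
  exact heq

lemma no_self_par (hvv : par v = some v) : False := by
  have hvr : v ≠ r := fun h => by rw [h, hroot] at hvv; exact nomatch hvv
  have h1 : isAnc par r v := by
    have h2 := subtree_root_univ hroot hT
    have : v ∈ subtree par r := by rw [h2]; trivial
    exact this
  exact hvr (eq_of_self_par_isAnc hvv h1).symm

lemma ne_of_par (hvp : par v = some p) : v ≠ p := by
  rintro rfl
  exact no_self_par hroot hT hvp

omit hroot hT in
lemma mem_parent_subtree (hvp : par v = some p) : v ∈ subtree par p :=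
  isAnc_of_par hvp

lemma subtree_subset_diff (hvp : par v = some p) :
    subtree par v ⊆ subtree par p \ {p} := by
  rw [subtree_eq_comp hroot hT hvp]
  exact compIn_subset ⟨mem_parent_subtree hvp, ne_of_par hroot hT hvp⟩

lemma parent_not_mem_subtree (hvp : par v = some p) : p ∉ subtree par v :=
  fun h => (subtree_subset_diff hroot hT hvp h).2 rfl

lemma bdry_subset (hvp : par v = some p) :
    bdry G par v ⊆ {p} ∪ bdry G par p := by
  rintro x ⟨hx1, u, hu1, hu2⟩
  by_cases hxp : x = p
  · exact Or.inl hxp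
  by_cases hxS : x ∈ subtree par p
  · exfalso
    apply hx1
    rw [subtree_eq_comp hroot hT hvp] at hu1 ⊢
    refine mem_compIn_closure hu1 (Relation.ReflTransGen.single ?_)
    refine ⟨?_, ⟨hxS, hxp⟩, hu2.symm⟩
    rcases mem_compIn_cases hu1 with rfl | h
    · exact ⟨mem_parent_subtree hvp, ne_of_par hroot hT hvp⟩
    · exact h
  · exact Or.inr ⟨hxS, u, subtree_subset_diff hroot hT hvp hu1 |>.1, hu2⟩

lemma subtree_conn (hvp : par v = some p) :
    ∀ u ∈ subtree par v, reachIn G (subtree par v) v u := by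
  intro u hu
  rw [subtree_eq_comp hroot hT hvp] at hu ⊢
  exact reachIn_compIn hu

end Derived
section Walks

variable {G : SimpleGraph V} [DecidableEq V] {A : Set V} {x y z u v m : V}

omit [DecidableEq V] in
lemma loop_support (w : G.Walk y y) (hw : w.IsPath) : w.support = [y] := by
  cases w with
  | nil => rfl
  | cons h w' =>
    exfalso
    have h1 := hw.support_nodup
    rw [Walk.support_cons] at h1
    exact (List.nodup_cons.mp h1).1 (Walk.end_mem_support w')

lemma takeUntil_cons_ne {h : G.Adj x z} {p : G.Walk z y} (hu : u ∈ (Walk.cons h p).support)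
    (hne : x ≠ u) (hu' : u ∈ p.support) :
    (Walk.cons h p).takeUntil u hu = Walk.cons h (p.takeUntil u hu') := by
  simp [Walk.takeUntil, hne]

lemma dropUntil_cons_ne {h : G.Adj x z} {p : G.Walk z y} (hu : u ∈ (Walk.cons h p).support)
    (hne : x ≠ u) (hu' : u ∈ p.support) :
    (Walk.cons h p).dropUntil u hu = p.dropUntil u hu' := by
  simp [Walk.dropUntil, hne]

lemma take_drop_inter {w : G.Walk x y} (hw : w.IsPath) (hu : u ∈ w.support)
    (hz1 : z ∈ (w.takeUntil u hu).support) (hz2 : z ∈ (w.dropUntil u hu).support) : z = u := by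
  have hspec := w.take_spec hu
  have hnodup : w.support.Nodup := hw.support_nodup
  rw [← hspec, Walk.support_append] at hnodup
  rw [Walk.support_eq_cons (w.dropUntil u hu), List.mem_cons] at hz2
  rcases hz2 with rfl | h1
  · rfl
  · exact absurd h1 (List.disjoint_of_nodup_append hnodup hz1)

omit [DecidableEq V] in
lemma walk_reachIn (w : G.Walk x y) (hA : ∀ z ∈ w.support, z ∈ A) :
    ∀ z ∈ w.support, reachIn G A x z := by
  induction w with
  | nil =>
    intro z hz
    rw [Walk.support_nil, List.mem_singleton] at hz
    exact hz ▸ Relation.ReflTransGen.refl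
  | @cons a b c h w' ih =>
    intro z hz
    rw [Walk.support_cons, List.mem_cons] at hz
    have haA : a ∈ A := hA a (by simp)
    have hbA : b ∈ A := hA b (by simp)
    have hA' : ∀ t ∈ w'.support, t ∈ A := fun t ht => hA t (by simp [ht])
    rcases hz with rfl | hz
    · exact Relation.ReflTransGen.refl
    · exact Relation.ReflTransGen.head ⟨haA, hbA, h⟩ (ih hA' z hz)

omit [DecidableEq V] in
lemma reachIn_walk (h : reachIn G A x y) (hx : x ∈ A) :
    ∃ w : G.Walk x y, ∀ z ∈ w.support, z ∈ A := by
  induction h with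
  | refl => exact ⟨Walk.nil, by simp [hx]⟩
  | @tail b c h1 h2 ih =>
    obtain ⟨w, hw⟩ := ih
    refine ⟨w.append (Walk.cons h2.2.2 Walk.nil), ?_⟩
    intro z hz
    rw [Walk.mem_support_append_iff] at hz
    rcases hz with hz | hz
    · exact hw z hz
    · rw [Walk.support_cons, Walk.support_nil, List.mem_cons, List.mem_singleton] at hz
      rcases hz with rfl | rfl
      · exact h2.1
      · exact h2.2.1

lemma exists_last_mem (w : G.Walk x y) (hw : w.IsPath) (hne : ∃ z ∈ w.support, z ∈ A) :
    ∃ m, ∃ hm : m ∈ w.support, m ∈ A ∧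
      ∀ z ∈ w.support, z ∈ A → z ∈ (w.takeUntil m hm).support := by
  induction w with
  | nil =>
    obtain ⟨z, hz, hzA⟩ := hne
    rw [Walk.support_nil, List.mem_singleton] at hz; subst hz
    refine ⟨z, by simp, hzA, ?_⟩
    intro t ht _
    rw [Walk.support_nil, List.mem_singleton] at ht; subst ht
    exact Walk.start_mem_support _
  | @cons a b c h w' ih =>
    by_cases hA' : ∃ z ∈ w'.support, z ∈ A
    · obtain ⟨m, hm', hmA, hprop⟩ := ih hw.of_cons hA'
      have hane : a ≠ m := by
        intro hh
        have h2 := hw.support_nodup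
        rw [Walk.support_cons, List.nodup_cons] at h2
        exact h2.1 (hh ▸ hm')
      have hm : m ∈ (Walk.cons h w').support := by simp [hm']
      refine ⟨m, hm, hmA, ?_⟩
      intro t ht htA
      rw [takeUntil_cons_ne hm hane hm', Walk.support_cons, List.mem_cons]
      rw [Walk.support_cons, List.mem_cons] at ht
      rcases ht with rfl | ht
      · exact Or.inl rfl
      · exact Or.inr (hprop t ht htA)
    · obtain ⟨z, hz, hzA⟩ := hne
      rw [Walk.support_cons, List.mem_cons] at hz
      have hza : z = a := by
        rcases hz with rfl | hz
        · rfl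
        · exact absurd ⟨z, hz, hzA⟩ hA'
      subst hza
      have hmem : z ∈ (Walk.cons h w').support := by simp
      refine ⟨z, hmem, hzA, ?_⟩
      intro t ht htA
      rw [Walk.support_cons, List.mem_cons] at ht
      rcases ht with rfl | ht
      · exact Walk.start_mem_support _
      · exact absurd ⟨t, ht, htA⟩ hA'

lemma first_exit (w : G.Walk x y) (hw : w.IsPath) (hx : x ∈ A) (hy : y ∉ A) :
    ∃ b, ∃ hb : b ∈ w.support, b ∉ A ∧ (∃ u ∈ A, G.Adj u b) ∧
      ∀ z ∈ (w.takeUntil b hb).support, z = b ∨ z ∈ A := by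
  induction w with
  | nil => exact absurd hx hy
  | @cons a b' c h w' ih =>
    by_cases hb'A : b' ∈ A
    · obtain ⟨b, hb', hbA, hub, hprop⟩ := ih hw.of_cons hb'A hy
      have hane : a ≠ b := fun hh => hbA (hh ▸ hx)
      have hb : b ∈ (Walk.cons h w').support := by simp [hb']
      refine ⟨b, hb, hbA, hub, ?_⟩
      intro t ht
      rw [takeUntil_cons_ne hb hane hb', Walk.support_cons, List.mem_cons] at ht
      rcases ht with rfl | ht
      · exact Or.inr hx
      · exact hprop t ht
    · have hb : b' ∈ (Walk.cons h w').support := by simp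
      refine ⟨b', hb, hb'A, ⟨a, hx, h⟩, ?_⟩
      intro t ht
      have hane : a ≠ b' := fun hh => hb'A (hh ▸ hx)
      have hb'' : b' ∈ w'.support := Walk.start_mem_support _
      rw [takeUntil_cons_ne hb hane hb'', Walk.support_cons, List.mem_cons] at ht
      rcases ht with rfl | ht
      · exact Or.inr hx
      · left
        have hls : (w'.takeUntil b' hb'').support = [b'] :=
          loop_support _ (hw.of_cons.takeUntil hb'')
        rw [hls, List.mem_singleton] at ht
        exact ht

lemma mem_takeUntil_of_not_mem_takeUntil {w : G.Walk x y} (hw : w.IsPath)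
    (hu : u ∈ w.support) (hz : z ∈ w.support)
    (h : z ∉ (w.takeUntil u hu).support) : u ∈ (w.takeUntil z hz).support := by
  induction w with
  | nil =>
    exfalso
    apply h
    have hz2 := hz
    rw [Walk.support_nil, List.mem_singleton] at hz2
    subst hz2
    exact Walk.start_mem_support _
  | @cons a b c hadj w' ih =>
    by_cases hua : a = u
    · subst hua
      exact Walk.start_mem_support _
    · have hu' : u ∈ w'.support := by
        have hu2 := hu
        rw [Walk.support_cons, List.mem_cons] at hu2
        rcases hu2 with rfl | hh
        · exact absurd rfl hua
        · exact hh
      have hza : z ≠ a := by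
        rintro rfl
        exact h (Walk.start_mem_support _)
      have hz' : z ∈ w'.support := by
        have hz2 := hz
        rw [Walk.support_cons, List.mem_cons] at hz2
        rcases hz2 with rfl | hh
        · exact absurd rfl hza
        · exact hh
      rw [takeUntil_cons_ne hu hua hu'] at h
      have h' : z ∉ (w'.takeUntil u hu').support := fun hh => h (by simp [hh])
      have hres := ih hw.of_cons hu' hz' h'
      rw [takeUntil_cons_ne hz (fun hh => hza hh.symm) hz']
      simp [hres]

omit [DecidableEq V] in
lemma walk_confined (w : G.Walk x y) (hw : w.IsPath) (hx : x ∈ A)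
    (hall : ∀ u b, u ∈ A → b ∉ A → G.Adj u b → b ∈ w.support → b = y) :
    ∀ z ∈ w.support, z ∈ A ∨ z = y := by
  induction w with
  | nil =>
    intro z hz
    rw [Walk.support_nil, List.mem_singleton] at hz
    exact Or.inl (hz ▸ hx)
  | @cons a b c h w' ih =>
    intro z hz
    by_cases hbA : b ∈ A
    · rw [Walk.support_cons, List.mem_cons] at hz
      rcases hz with rfl | hz
      · exact Or.inl hx
      · exact ih hw.of_cons hbA
          (fun u b' hu hb' hadj hmem => hall u b' hu hb' hadj (by simp [hmem])) z hz
    · have hby : b = c := hall a b hx hbA h (by simp)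
      subst hby
      have hls : w'.support = [b] := loop_support _ hw.of_cons
      rw [Walk.support_cons, hls, List.mem_cons, List.mem_singleton] at hz
      rcases hz with rfl | rfl
      · exact Or.inl hx
      · exact Or.inr rfl

end Walks

/-- In a 2-cut STT, a node `v`, its parent `p`, and any `a ∈ ∂(T_p)`
lie on a common path in the underlying tree `G`. -/
theorem node_parent_bdry_on_common_path [Fintype V] (G : SimpleGraph V) (hG : G.IsTree)
    (par : V → Option V) (r : V) (hroot : par r = none)
    (hT : IsSearchTree G par Set.univ r) (h2 : TwoCut G par)
    (v p a : V) (hvp : par v = some p) (ha : a ∈ bdry G par p) :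
    ∃ (x y : V) (w : G.Walk x y), w.IsPath ∧
      v ∈ w.support ∧ p ∈ w.support ∧ a ∈ w.support := by
  classical
  obtain ⟨haT, u₀, hu₀T, hu₀a⟩ := ha
  have hvTp : v ∈ subtree par p := mem_parent_subtree hvp
  have hvTv : v ∈ subtree par v := mem_subtree_self
  have hpTp : p ∈ subtree par p := mem_subtree_self
  have hpnTv : p ∉ subtree par v := parent_not_mem_subtree hroot hT hvp
  have hTvsub : subtree par v ⊆ subtree par p \ {p} := subtree_subset_diff hroot hT hvp
  have hanTv : a ∉ subtree par v := fun h => haT (hTvsub h).1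
  have hvne_p : v ≠ p := ne_of_par hroot hT hvp
  -- the path from v to a
  obtain ⟨P, hP, hPuniq⟩ := hG.existsUnique_path v a
  by_cases hpP : p ∈ P.support
  · exact ⟨v, a, P, hP, P.start_mem_support, hpP, P.end_mem_support⟩
  -- connectivity of the subtree of p
  have hTpconn : ∀ u ∈ subtree par p, reachIn G (subtree par p) p u := by
    by_cases hpr : p = r
    · subst hpr
      rw [subtree_root_univ hroot hT]
      intro u _
      obtain ⟨w⟩ := hG.isConnected.preconnected p u
      exact walk_reachIn w (fun z _ => Set.mem_univ z) u w.end_mem_support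
    · rcases parent_loc hT p (Set.mem_univ p) hpr with h1 | ⟨q, _, h1⟩
      · exact subtree_conn hroot hT h1
      · exact subtree_conn hroot hT h1
  -- a path Q from v to p within subtree p
  obtain ⟨W0, hW0⟩ := reachIn_walk (reachIn.symm (hTpconn v hvTp)) hvTp
  set Q : G.Walk v p := (W0.toPath : G.Path v p).1 with hQdef
  have hQpath : Q.IsPath := (W0.toPath).2
  have hQTp : ∀ z ∈ Q.support, z ∈ subtree par p := fun z hz =>
    hW0 z (W0.support_toPath_subset hz)
  -- Q is confined to (subtree v) ∪ {p}
  have hQconf : ∀ z ∈ Q.support, z ∈ subtree par v ∨ z = p := by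
    refine walk_confined Q hQpath hvTv ?_
    intro u b hu hb hadj hmem
    rcases bdry_subset hroot hT hvp ⟨hb, u, hu, hadj.symm⟩ with h1 | h1
    · exact h1
    · exact absurd (hQTp b hmem) h1.1
  -- m : the last vertex of Q lying on P
  obtain ⟨m, hmQ, hmP, hlast⟩ := exists_last_mem (A := {t | t ∈ P.support}) Q hQpath
    ⟨v, Q.start_mem_support, P.start_mem_support⟩
  have hmP : m ∈ P.support := hmP
  have hmTv : m ∈ subtree par v := by
    rcases hQconf m hmQ with h1 | h1
    · exact h1
    · exact absurd (h1 ▸ hmP) hpP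
  by_cases hmv : m = v
  · -- success case: concatenate Q.reverse and P
    subst hmv
    have hdisj : ∀ z, z ∈ Q.support → z ∈ P.support → z = m := by
      intro z hz1 hz2
      have h3 := hlast z hz1 hz2
      have h4 : (Q.takeUntil m hmQ).support = [m] :=
        loop_support _ (hQpath.takeUntil hmQ)
      rw [h4, List.mem_singleton] at h3
      exact h3
    refine ⟨p, a, Q.reverse.append P, ?_, ?_, ?_, ?_⟩
    · rw [Walk.isPath_def, Walk.support_append, Walk.support_reverse]
      refine List.Nodup.append (by simpa using hQpath.support_nodup)
        (hP.support_nodup.sublist (List.tail_sublist _)) ?_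
      intro z hz1 hz2
      have hz1' : z ∈ Q.support := by simpa using hz1
      have hz2' : z ∈ P.support := List.mem_of_mem_tail hz2
      obtain rfl : z = m := hdisj z hz1' hz2'
      have h5 := hP.support_nodup
      rw [Walk.support_eq_cons, List.nodup_cons] at h5
      exact h5.1 hz2
    · rw [Walk.mem_support_append_iff]
      exact Or.inl (by simp)
    · rw [Walk.mem_support_append_iff]
      exact Or.inl (by simp)
    · exact (Q.reverse.append P).end_mem_support
  · -- contradiction case
    exfalso
    obtain ⟨c, hcv, hcm⟩ := exists_child hmTv hmv
    have hcne : c ≠ v := ne_of_par hroot hT hcv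
    have hceq : subtree par c = compIn G (subtree par v \ {v}) c :=
      subtree_eq_comp hroot hT hcv
    have hvnTc : v ∉ subtree par c := parent_not_mem_subtree hroot hT hcv
    have hTcsub : subtree par c ⊆ subtree par v := fun z hz =>
      (subtree_subset_diff hroot hT hcv hz).1
    have hTc_mem : ∀ z, reachIn G (subtree par v \ {v}) m z → z ∈ subtree par c := by
      intro z hz
      rw [hceq]
      exact mem_compIn_closure (hceq ▸ hcm) hz
    -- b : the exit vertex of P from subtree v
    obtain ⟨b, hbP, hbnTv, ⟨u₁, hu₁Tv, hu₁b⟩, hbtake⟩ :=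
      first_exit (A := subtree par v) P hP hvTv hanTv
    have hbp : b ≠ p := fun h => hpP (h ▸ hbP)
    have hbBp : b ∈ bdry G par p := by
      rcases bdry_subset hroot hT hvp ⟨hbnTv, u₁, hu₁Tv, hu₁b.symm⟩ with h1 | h1
      · exact absurd h1 hbp
      · exact h1
    have hbnTp : b ∉ subtree par p := hbBp.1
    have hbv : b ≠ v := fun h => hbnTp (h ▸ hvTp)
    -- the initial segment of P up to m stays in subtree v
    have hPmTv : ∀ z ∈ (P.takeUntil m hmP).support, z ∈ subtree par v := by
      obtain ⟨W1, hW1⟩ := reachIn_walk (subtree_conn hroot hT hvp m hmTv) hvTv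
      obtain ⟨Pm, _, hPmu⟩ := hG.existsUnique_path v m
      have he1 := hPmu _ (hP.takeUntil hmP)
      have he2 := hPmu _ (W1.toPath).2
      rw [he1, ← he2]
      intro z hz
      exact hW1 z (W1.support_toPath_subset hz)
    -- m lies before b on P
    have hres : m ∈ (P.takeUntil b hbP).support := by
      refine mem_takeUntil_of_not_mem_takeUntil hP hmP hbP ?_
      intro hmem
      exact hbnTv (hPmTv b hmem)
    -- gadget producing boundary elements of subtree c
    have gadget : ∀ (t : V) (Wseg : G.Walk m t), Wseg.IsPath → t ∉ subtree par c →
        m ≠ t → (∀ z ∈ Wseg.support, z ≠ t → z ∈ subtree par v \ {v}) →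
        t ∈ bdry G par c := by
      intro t Wseg hWpath htnTc hmt hseg
      have hrevpath : Wseg.reverse.IsPath := hWpath.reverse
      cases hrev : Wseg.reverse with
      | nil => exact absurd rfl hmt
      | cons hadj W2 =>
        rename_i u'
        have htW2 : t ∉ W2.support := by
          have h5 := hrevpath.support_nodup
          rw [hrev, Walk.support_cons, List.nodup_cons] at h5
          exact h5.1
        have hW2sub : ∀ z ∈ W2.support, z ∈ subtree par v \ {v} := by
          intro z hz
          have hzW : z ∈ Wseg.support := by
            have : z ∈ Wseg.reverse.support := by rw [hrev]; simp [hz]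
            rwa [Walk.support_reverse, List.mem_reverse] at this
          exact hseg z hzW (fun h => htW2 (h ▸ hz))
        have hreach : reachIn G (subtree par v \ {v}) m u' :=
          walk_reachIn W2.reverse (by
            intro z hz
            rw [Walk.support_reverse, List.mem_reverse] at hz
            exact hW2sub z hz) u' W2.reverse.end_mem_support
        exact ⟨htnTc, u', hTc_mem u' hreach, hadj⟩
    -- p ∈ bdry c
    have hpB : p ∈ bdry G par c := by
      refine gadget p (Q.dropUntil m hmQ) (hQpath.dropUntil hmQ)
        (fun h => hpnTv (hTcsub h)) (fun h => hpnTv (h ▸ hmTv)) ?_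
      intro z hz hzp
      refine ⟨?_, ?_⟩
      · rcases hQconf z (Q.support_dropUntil_subset hmQ hz) with h1 | h1
        · exact h1
        · exact absurd h1 hzp
      · intro hzv
        subst hzv
        exact hmv (take_drop_inter hQpath hmQ (Walk.start_mem_support _) hz).symm
    -- b ∈ bdry c
    have hbB : b ∈ bdry G par c := by
      refine gadget b ((P.takeUntil b hbP).dropUntil m hres) ((hP.takeUntil hbP).dropUntil hres)
        (fun h => hbnTv (hTcsub h)) (fun h => hbnTv (h ▸ hmTv)) ?_
      intro z hz hzb
      have hzt : z ∈ (P.takeUntil b hbP).support :=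
        (P.takeUntil b hbP).support_dropUntil_subset hres hz
      refine ⟨?_, ?_⟩
      · rcases hbtake z hzt with h1 | h1
        · exact absurd h1 hzb
        · exact h1
      · intro hzv
        subst hzv
        exact hmv (take_drop_inter (hP.takeUntil hbP) hres (Walk.start_mem_support _) hz).symm
    -- v ∈ bdry c
    have hvB : v ∈ bdry G par c := by
      refine gadget v (P.takeUntil m hmP).reverse ((hP.takeUntil hmP).reverse)
        hvnTc hmv ?_
      intro z hz hzv
      rw [Walk.support_reverse, List.mem_reverse] at hz
      exact ⟨hPmTv z hz, hzv⟩
    -- contradiction with TwoCut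
    have hsub : ({v, p, b} : Set V) ⊆ bdry G par c := by
      intro z hz
      rcases hz with rfl | rfl | rfl
      · exact hvB
      · exact hpB
      · exact hbB
    have h3 : ({v, p, b} : Set V).ncard = 3 := by
      rw [Set.ncard_insert_of_notMem (by simp [hvne_p, hbv.symm] : v ∉ ({p, b} : Set V)),
        Set.ncard_pair (fun h => hbp h.symm)]
    have hle := Set.ncard_le_ncard hsub (Set.toFinite _)
    rw [h3] at hle
    exact absurd (hle.trans (h2 c)) (by norm_num)
end

section
/- In a 2-cut STT, every node has at most one child that is an indirect separator node. -/
open SimpleGraph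

variable {V : Type*}

section Aux

variable {G : SimpleGraph V} {par : V → Option V}

lemma reachIn_mem_right {S : Set V} {x y : V} (hx : x ∈ S) (h : reachIn G S x y) : y ∈ S := by
  induction h with
  | refl => exact hx
  | tail h1 h2 ih => exact h2.2.1

lemma reachIn_trans {S : Set V} {x y z : V} (h1 : reachIn G S x y) (h2 : reachIn G S y z) :
    reachIn G S x z := Relation.ReflTransGen.trans h1 h2

lemma reachIn_symm {S : Set V} {x y : V} (h : reachIn G S x y) : reachIn G S y x := by
  induction h with
  | refl => exact .refl
  | tail h1 h2 ih => exact Relation.ReflTransGen.head ⟨h2.2.1, h2.1, h2.2.2.symm⟩ ih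

lemma mem_compIn_self_s9 (G : SimpleGraph V) (S : Set V) (v : V) : v ∈ compIn G S v :=
  Relation.ReflTransGen.refl

lemma compIn_subset_s9 {S : Set V} {v : V} (hv : v ∈ S) : compIn G S v ⊆ S :=
  fun _ hu => reachIn_mem_right hv hu

lemma compIn_strengthen {S : Set V} {v u : V} (h : reachIn G S v u) :
    reachIn G (compIn G S v) v u := by
  induction h with
  | refl => exact .refl
  | @tail y z h1 h2 ih =>
    exact ih.tail ⟨h1, h1.tail h2, h2.2.2⟩

lemma reachIn_compIn_s9 {S : Set V} {v x y : V} (hx : x ∈ compIn G S v) (hy : y ∈ compIn G S v) :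
    reachIn G (compIn G S v) x y :=
  reachIn_trans (reachIn_symm (compIn_strengthen hx)) (compIn_strengthen hy)

/-- Closure and connectivity conditions bundled with the search tree property. -/
def GoodST (G : SimpleGraph V) (par : V → Option V) (S : Set V) (r : V) : Prop :=
  IsSearchTree G par S r ∧
  (∀ a b, a ∉ S → par a = some b → b ∉ S) ∧
  (∀ b, par r = some b → b ∉ S) ∧
  (∀ x ∈ S, ∀ y ∈ S, reachIn G S x y)

lemma IsSearchTree.root_mem {S : Set V} {r : V} (hT : IsSearchTree G par S r) : r ∈ S := by
  cases hT with
  | node S r ρ hr hρ h => exact hr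

lemma IsSearchTree.par_mem {S : Set V} {r : V} (hT : IsSearchTree G par S r) :
    ∀ x ∈ S, x ≠ r → ∃ y ∈ S, par x = some y := by
  induction hT with
  | node S r ρ hr hρ h ih =>
    intro x hx hne
    by_cases hx' : x = ρ x
    · exact ⟨r, hr, hx' ▸ hρ x hx hne⟩
    · obtain ⟨y, hy, hpy⟩ := ih x hx hne x (mem_compIn_self_s9 G _ x) hx'
      have hxA : x ∈ S \ {r} := ⟨hx, hne⟩
      exact ⟨y, (compIn_subset_s9 hxA hy).1, hpy⟩

lemma IsSearchTree.anc_root {S : Set V} {r : V} (hT : IsSearchTree G par S r) :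
    ∀ x ∈ S, Relation.ReflTransGen (fun a b => par a = some b) x r := by
  induction hT with
  | node S r ρ hr hρ h ih =>
    intro x hx
    by_cases hne : x = r
    · exact hne ▸ .refl
    · exact (ih x hx hne x (mem_compIn_self_s9 G _ x)).tail (hρ x hx hne)

lemma GoodST.subtree_eq {S : Set V} {r : V} (hG : GoodST G par S r) : subtree par r = S := by
  obtain ⟨hT, hcl, hrt, hconn⟩ := hG
  ext u
  constructor
  · intro hu
    induction hu using Relation.ReflTransGen.head_induction_on with
    | refl => exact hT.root_mem
    | head h' h ih =>
      rename_i a cc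
      by_contra haS
      exact hcl a cc haS h' ih
  · intro hu
    exact hT.anc_root u hu

lemma GoodST.child {S : Set V} {r c : V} (hG : GoodST G par S r) (hc : c ∈ S)
    (hpar : par c = some r) : GoodST G par (compIn G (S \ {r}) c) c := by
  obtain ⟨hT, hcl, hrt, hconn⟩ := hG
  have hcr : c ≠ r := fun h => hrt c (h ▸ hpar) (h ▸ hc)
  cases hT with
  | node S r ρ hr hρ h =>
    have hcA : c ∈ S \ {r} := ⟨hc, hcr⟩
    have hρc : ρ c = c := by
      by_contra hne
      obtain ⟨y, hy, hpy⟩ := (h c hc hcr).par_mem c (mem_compIn_self_s9 G _ c) (fun hh => hne hh.symm)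
      rw [hpar] at hpy
      exact (compIn_subset_s9 hcA hy).2 (Option.some.inj hpy).symm
    have hTc := h c hc hcr
    rw [hρc] at hTc
    refine ⟨hTc, ?_, ?_, ?_⟩
    · intro a b ha hb hbK
      have hbA : b ∈ S \ {r} := compIn_subset_s9 hcA hbK
      by_cases haS : a ∈ S
      · by_cases har : a = r
        · exact hrt b (har ▸ hb) hbA.1
        · have haA : a ∈ S \ {r} := ⟨haS, har⟩
          by_cases haρ : a = ρ a
          · have := hρ a haS har
            rw [← haρ, hb] at this
            exact hbA.2 (Option.some.inj this)
          · obtain ⟨y, hy, hpy⟩ := (h a haS har).par_mem a (mem_compIn_self_s9 G _ a) haρ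
            rw [hb] at hpy
            have hbKa : b ∈ compIn G (S \ {r}) a := (Option.some.inj hpy) ▸ hy
            -- then a ∈ compIn c, contradiction
            exact ha (reachIn_trans hbK (reachIn_symm hbKa))
      · exact hcl a b haS hb hbA.1
    · intro b hb
      rw [hpar] at hb
      intro hbK
      exact (compIn_subset_s9 hcA hbK).2 (Option.some.inj hb).symm
    · intro x hx y hy
      exact reachIn_compIn_s9 hx hy

lemma GoodST.descend {S : Set V} {r : V} (hG : GoodST G par S r) (p : V)
    (hanc : Relation.ReflTransGen (fun a b => par a = some b) p r) :
    ∃ Sp, GoodST G par Sp p := by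
  induction hanc using Relation.ReflTransGen.head_induction_on with
  | refl => exact ⟨S, hG⟩
  | head h' h ih =>
    rename_i a b
    obtain ⟨Sb, hSb⟩ := ih
    have haSb : a ∈ Sb := by
      rw [← hSb.subtree_eq]
      exact Relation.ReflTransGen.single h'
    exact ⟨_, hSb.child haSb h'⟩

lemma reach_hit {S : Set V} {c p : V} (hc : c ∈ S \ {p}) :
    ∀ {y : V}, reachIn G S c y →
      y ∈ compIn G (S \ {p}) c ∨ ∃ u ∈ compIn G (S \ {p}) c, G.Adj u p := by
  intro y h
  induction h with
  | refl => exact Or.inl (mem_compIn_self_s9 G _ c)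
  | @tail y z h1 h2 ih =>
    rcases ih with hy | hex
    · by_cases hzp : z = p
      · exact Or.inr ⟨y, hy, hzp ▸ h2.2.2⟩
      · exact Or.inl (hy.tail ⟨compIn_subset_s9 hc hy, ⟨h2.2.1, hzp⟩, h2.2.2⟩)
    · exact Or.inr hex

lemma GoodST.child_ne {Sp : Set V} {p c : V} (hG : GoodST G par Sp p) (hc : c ∈ Sp)
    (hpar : par c = some p) : c ≠ p :=
  fun h => hG.2.2.1 p (h ▸ hpar) (h ▸ hc)

lemma GoodST.subtree_child_eq {Sp : Set V} {p c : V} (hG : GoodST G par Sp p) (hc : c ∈ Sp)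
    (hpar : par c = some p) : subtree par c = compIn G (Sp \ {p}) c :=
  (hG.child hc hpar).subtree_eq

lemma GoodST.parent_mem_bdry {Sp : Set V} {p c : V} (hG : GoodST G par Sp p) (hc : c ∈ Sp)
    (hpar : par c = some p) : p ∈ bdry G par c := by
  have hcp : c ≠ p := hG.child_ne hc hpar
  have hsub : subtree par c = compIn G (Sp \ {p}) c := hG.subtree_child_eq hc hpar
  have hreach : reachIn G Sp c p := hG.2.2.2 c hc p hG.1.root_mem
  have hcA : c ∈ Sp \ {p} := ⟨hc, hcp⟩
  rcases reach_hit hcA hreach with hmem | ⟨u, hu, hadj⟩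
  · exact absurd ((compIn_subset_s9 hcA hmem).2 rfl) (fun h => h)
  · refine ⟨?_, u, hsub ▸ hu, hadj.symm⟩
    rw [hsub]
    intro hp
    exact (compIn_subset_s9 hcA hp).2 rfl

lemma GoodST.bdry_child_subset {Sp : Set V} {p c : V} (hG : GoodST G par Sp p) (hc : c ∈ Sp)
    (hpar : par c = some p) : bdry G par c ⊆ insert p (bdry G par p) := by
  have hcp : c ≠ p := hG.child_ne hc hpar
  have hsubc : subtree par c = compIn G (Sp \ {p}) c := hG.subtree_child_eq hc hpar
  have hsubp : subtree par p = Sp := hG.subtree_eq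
  have hcA : c ∈ Sp \ {p} := ⟨hc, hcp⟩
  rintro x ⟨hxn, u, hu, hadj⟩
  rw [hsubc] at hxn hu
  by_cases hxS : x ∈ Sp
  · by_cases hxp : x = p
    · exact Or.inl hxp
    · exact absurd (hu.tail ⟨compIn_subset_s9 hcA hu, ⟨hxS, hxp⟩, hadj.symm⟩) hxn
  · exact Or.inr ⟨hsubp ▸ hxS, u, hsubp ▸ (compIn_subset_s9 hcA hu).1, hadj⟩

lemma walk_of_reachIn {S : Set V} {a b : V} (ha : a ∈ S) (h : reachIn G S a b) :
    ∃ w : G.Walk a b, ∀ v ∈ w.support, v ∈ S := by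
  induction h with
  | refl => exact ⟨.nil, by simpa using ha⟩
  | @tail y z h1 h2 ih =>
    obtain ⟨w, hw⟩ := ih
    refine ⟨w.concat h2.2.2, ?_⟩
    intro v hv
    rw [SimpleGraph.Walk.support_concat, List.mem_append] at hv
    rcases hv with hv | hv
    · exact hw v hv
    · simp at hv
      exact hv ▸ h2.2.1

lemma reachIn_univ_of_reachable {a b : V} (h : G.Reachable a b) :
    reachIn G Set.univ a b := by
  obtain ⟨w⟩ := h
  induction w with
  | nil => exact .refl
  | cons hadj w ih => exact Relation.ReflTransGen.head ⟨trivial, trivial, hadj⟩ ih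

lemma good_univ {r : V} (hGt : G.IsTree) (hroot : par r = none)
    (hT : IsSearchTree G par Set.univ r) : GoodST G par Set.univ r := by
  refine ⟨hT, ?_, ?_, ?_⟩
  · exact fun a b ha _ => absurd trivial ha
  · intro b hb
    rw [hroot] at hb
    cases hb
  · exact fun x _ y _ => reachIn_univ_of_reachable (hGt.isConnected.preconnected x y)

end Aux

lemma pair_mem_extract {α : Type*} {s : Set α} {p : α} (h : s.ncard = 2) (hp : p ∈ s) :
    ∃ x, x ≠ p ∧ s = {p, x} := by
  obtain ⟨a, b, hab, rfl⟩ := Set.ncard_eq_two.mp h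
  simp only [Set.mem_insert_iff, Set.mem_singleton_iff] at hp
  rcases hp with rfl | rfl
  · exact ⟨b, Ne.symm hab, rfl⟩
  · exact ⟨a, hab, Set.pair_comm a p⟩

/-- In a 2-cut STT, every node has at most one child that is an indirect
separator node (a separator child `c` with `∂(T_c)` not equal to `{p, g}`,
where `g` is the parent of `p`). -/
theorem at_most_one_indirect_separator_child [Fintype V] (G : SimpleGraph V)
    (hG : G.IsTree) (par : V → Option V) (r : V) (hroot : par r = none)
    (hT : IsSearchTree G par Set.univ r) (h2 : TwoCut G par)
    (p c c' : V) (hc : par c = some p) (hc' : par c' = some p)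
    (hsep : (bdry G par c).ncard = 2) (hsep' : (bdry G par c').ncard = 2)
    (hi : ∀ g, par p = some g → bdry G par c ≠ {p, g})
    (hi' : ∀ g, par p = some g → bdry G par c' ≠ {p, g}) :
    c = c' := by
  classical
  by_contra hne
  have hGood : GoodST G par Set.univ r := good_univ hG hroot hT
  have hancp : Relation.ReflTransGen (fun a b => par a = some b) p r :=
    hGood.1.anc_root p trivial
  obtain ⟨Sp, hSp⟩ := hGood.descend p hancp
  have hcSp : c ∈ Sp := by
    rw [← hSp.subtree_eq]; exact Relation.ReflTransGen.single hc
  have hc'Sp : c' ∈ Sp := by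
    rw [← hSp.subtree_eq]; exact Relation.ReflTransGen.single hc'
  have hpbc : p ∈ bdry G par c := hSp.parent_mem_bdry hcSp hc
  have hpbc' : p ∈ bdry G par c' := hSp.parent_mem_bdry hc'Sp hc'
  obtain ⟨x, hxp, hbc⟩ := pair_mem_extract hsep hpbc
  obtain ⟨x', hxp', hbc'⟩ := pair_mem_extract hsep' hpbc'
  have hxbdc : x ∈ bdry G par c := by rw [hbc]; right; rfl
  have hx'bdc' : x' ∈ bdry G par c' := by rw [hbc']; right; rfl
  have hxbp : x ∈ bdry G par p := by
    rcases hSp.bdry_child_subset hcSp hc hxbdc with h | h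
    · exact absurd h hxp
    · exact h
  have hx'bp : x' ∈ bdry G par p := by
    rcases hSp.bdry_child_subset hc'Sp hc' hx'bdc' with h | h
    · exact absurd h hxp'
    · exact h
  have hpr : p ≠ r := by
    intro h
    subst h
    exact hxbp.1 (by rw [hGood.subtree_eq]; trivial)
  obtain ⟨g, -, hg⟩ := hGood.1.par_mem p trivial hpr
  have hancg : Relation.ReflTransGen (fun a b => par a = some b) g r := by
    rcases Relation.ReflTransGen.cases_head hancp with h | ⟨d, hd, hdr⟩
    · exact absurd h hpr
    · rw [hg] at hd
      exact (Option.some.inj hd) ▸ hdr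
  obtain ⟨Sg, hSg⟩ := hGood.descend g hancg
  have hpSg : p ∈ Sg := by rw [← hSg.subtree_eq]; exact Relation.ReflTransGen.single hg
  have hgbp : g ∈ bdry G par p := hSg.parent_mem_bdry hpSg hg
  have hxg : x ≠ g := fun h => hi g hg (h ▸ hbc)
  have hx'g : x' ≠ g := fun h => hi' g hg (h ▸ hbc')
  have hxx' : x = x' := by
    by_contra hxx
    have hsub3 : ({g, x, x'} : Set V) ⊆ bdry G par p := by
      intro z hz
      simp only [Set.mem_insert_iff, Set.mem_singleton_iff] at hz
      rcases hz with rfl | rfl | rfl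
      · exact hgbp
      · exact hxbp
      · exact hx'bp
    have h3 : ({g, x, x'} : Set V).ncard = 3 := by
      rw [Set.ncard_insert_of_notMem (by simp [Ne.symm hxg, Ne.symm hx'g]) (Set.toFinite _),
        Set.ncard_insert_of_notMem (by simpa using hxx) (Set.toFinite _), Set.ncard_singleton]
    have hle := Set.ncard_le_ncard hsub3 (Set.toFinite _)
    have h2p := h2 p
    omega
  subst hxx'
  have hchild := hSp.child hcSp hc
  have hchild' := hSp.child hc'Sp hc'
  have hsubc : subtree par c = compIn G (Sp \ {p}) c := hchild.subtree_eq
  have hsubc' : subtree par c' = compIn G (Sp \ {p}) c' := hchild'.subtree_eq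
  have hcp : c ≠ p := hSp.child_ne hcSp hc
  have hc'p : c' ≠ p := hSp.child_ne hc'Sp hc'
  have hcA : c ∈ Sp \ {p} := ⟨hcSp, hcp⟩
  have hc'A : c' ∈ Sp \ {p} := ⟨hc'Sp, hc'p⟩
  obtain ⟨hyn, u, hu, hyu⟩ := hxbdc
  obtain ⟨hyn', u', hu', hyu'⟩ := hx'bdc'
  rw [hsubc] at hu
  rw [hsubc'] at hu'
  have huu' : u ≠ u' := by
    rintro rfl
    have hcc' : c' ∈ compIn G (Sp \ {p}) c := reachIn_trans hu (reachIn_symm hu')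
    obtain ⟨z, hz, hpz⟩ := hchild.1.par_mem c' hcc' (Ne.symm hne)
    rw [hc'] at hpz
    exact (compIn_subset_s9 hcA hz).2 (Option.some.inj hpz).symm
  have hyS : x ∉ Sp := by
    rw [← hSp.subtree_eq]
    exact hxbp.1
  have huS : u ∈ Sp := (compIn_subset_s9 hcA hu).1
  have hu'S : u' ∈ Sp := (compIn_subset_s9 hc'A hu').1
  obtain ⟨w, hw⟩ := walk_of_reachIn huS (hSp.2.2.2 u huS u' hu'S)
  have hyw : x ∉ (w.toPath : G.Walk u u').support :=
    fun h => hyS (hw x (SimpleGraph.Walk.support_toPath_subset w h))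
  have hadj1 : G.Adj u x := hyu.symm
  have hadj2 : G.Adj x u' := hyu'
  have hpath2 : (SimpleGraph.Walk.cons hadj1
      (SimpleGraph.Walk.cons hadj2 SimpleGraph.Walk.nil)).IsPath := by
    rw [SimpleGraph.Walk.cons_isPath_iff, SimpleGraph.Walk.cons_isPath_iff]
    refine ⟨⟨SimpleGraph.Walk.IsPath.nil, ?_⟩, ?_⟩
    · simp only [SimpleGraph.Walk.support_nil, List.mem_singleton]
      exact fun h => hyS (h ▸ hu'S)
    · simp only [SimpleGraph.Walk.support_cons, SimpleGraph.Walk.support_nil,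
        List.mem_cons, List.mem_singleton]
      push_neg
      exact ⟨fun h => hyS (h ▸ huS), huu', List.not_mem_nil⟩
  have huniq := SimpleGraph.isAcyclic_iff_path_unique.mp hG.IsAcyclic w.toPath ⟨_, hpath2⟩
  have hxmem : x ∈ (w.toPath : G.Walk u u').support := by
    rw [huniq]
    simp
  exact hyw hxmem
end
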